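/- Let μ ∈ 𝒫_ac(ℝ^d) and let R be a population rank map of μ, say R = ∇φ μ-a.e. for a convex function φ : ℝ^d → ℝ. Fix a ∈ ℝ^d and b > 0, and let μ' be the pushforward of μ under x ↦ a + b x. Then the map R'(x) := R((x − a)/b) is a population rank map of μ': it coincides μ'-a.e. with the gradient of the convex function ψ(x) := b·φ((x − a)/b) and pushes μ' forward to 𝒰^d. Consequently, if Z_1 ∈ ℝ^{d_1} and Z_2 ∈ ℝ^{d_2} are jointly distributed with absolutely continuous marginal laws, then for all a_1 ∈ ℝ^{d_1}, a_2 ∈ ℝ^{d_2} and b_1, b_2 > 0, RdCov²(a_1 + b_1 Z_1, a_2 + b_2 Z_2) = RdCov²(Z_1, Z_2), where each rank distance covariance is computed with population rank maps of the corresponding marginal laws. -/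

import Mathlib

open MeasureTheory ProbabilityTheory Filter Topology
open scoped ENNReal NNReal

noncomputable section

/-- `Euc d` is the Euclidean space `ℝ^d` with its Euclidean norm. -/
abbrev Euc (d : ℕ) : Type := EuclideanSpace ℝ (Fin d)

/-- The unit cube `[0,1]^d`. -/
def unitCube (d : ℕ) : Set (Euc d) := {x | ∀ i, x i ∈ Set.Icc (0 : ℝ) 1}

/-- The uniform distribution `𝒰^d` on `[0,1]^d`. -/
def unifCube (d : ℕ) : Measure (Euc d) := volume.restrict (unitCube d)

/-- A population rank map of `μ ∈ 𝒫_ac(ℝ^d)`: a measurable map coinciding `μ`-a.e. with the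
gradient of a convex function and pushing `μ` forward to the uniform distribution on the
unit cube. -/
def IsRankMap {d : ℕ} (μ : Measure (Euc d)) (R : Euc d → Euc d) : Prop :=
  Measurable R ∧
    (∃ φ : Euc d → ℝ, ConvexOn ℝ Set.univ φ ∧ ∀ᵐ x ∂μ, HasGradientAt φ (R x) x) ∧
    Measure.map R μ = unifCube d

/-- The population rank distance covariance `RdCov²` of a joint law `ν` on `ℝ^{d₁} × ℝ^{d₂}`,
relative to rank maps `R₁, R₂` of its marginals. -/
def RdCovSq {d₁ d₂ : ℕ} (ν : Measure (Euc d₁ × Euc d₂))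
    (R₁ : Euc d₁ → Euc d₁) (R₂ : Euc d₂ → Euc d₂) : ℝ :=
  (∫ p : (Euc d₁ × Euc d₂) × (Euc d₁ × Euc d₂),
      ‖R₁ p.1.1 - R₁ p.2.1‖ * ‖R₂ p.1.2 - R₂ p.2.2‖ ∂ ν.prod ν)
  + (∫ p : (Euc d₁ × Euc d₂) × (Euc d₁ × Euc d₂), ‖R₁ p.1.1 - R₁ p.2.1‖ ∂ ν.prod ν)
    * (∫ p : (Euc d₁ × Euc d₂) × (Euc d₁ × Euc d₂), ‖R₂ p.1.2 - R₂ p.2.2‖ ∂ ν.prod ν)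
  - 2 * (∫ p : (Euc d₁ × Euc d₂) × (Euc d₁ × Euc d₂) × (Euc d₁ × Euc d₂),
      ‖R₁ p.1.1 - R₁ p.2.1.1‖ * ‖R₂ p.1.2 - R₂ p.2.2.2‖ ∂ ν.prod (ν.prod ν))
-- ===== auxiliary lemmas =====

section Aux
open scoped RealInnerProductSpace

theorem line_deriv {d : ℕ} {φ : Euc d → ℝ} {p x : Euc d} (h : HasGradientAt φ p x) (v : Euc d) :
    HasDerivAt (fun t : ℝ => φ (x + t • v)) ⟪p, v⟫ 0 := by
  have hf := h.hasFDerivAt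
  have hc : HasDerivAt (fun t : ℝ => x + t • v) v 0 := by
    simpa using ((hasDerivAt_id (0:ℝ)).smul_const v).const_add x
  have hf' : HasFDerivAt φ ((InnerProductSpace.toDual ℝ (Euc d)) p) (x + (0:ℝ) • v) := by
    simpa using hf
  simpa [Function.comp_def] using hf'.comp_hasDerivAt (0:ℝ) hc

theorem slope_tendsto {d : ℕ} {φ : Euc d → ℝ} {p x : Euc d} (h : HasGradientAt φ p x) (v : Euc d) :
    Tendsto (fun t : ℝ => (φ (x + t • v) - φ x) / t) (𝓝[>] (0:ℝ)) (𝓝 ⟪p, v⟫) := by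
  have hd := line_deriv h v
  have h1 := hasDerivAt_iff_tendsto_slope.1 hd
  have h2 : Tendsto (slope (fun t : ℝ => φ (x + t • v)) 0) (𝓝[>] (0:ℝ)) (𝓝 ⟪p, v⟫) :=
    h1.mono_left (nhdsWithin_mono _ (fun t ht => ne_of_gt ht))
  refine h2.congr' ?_
  filter_upwards [self_mem_nhdsWithin] with t ht
  simp [slope_def_field]

theorem convex_subgrad {d : ℕ} {φ : Euc d → ℝ} (hφ : ConvexOn ℝ Set.univ φ)
    {p x : Euc d} (h : HasGradientAt φ p x) (z : Euc d) :
    φ x + ⟪p, z - x⟫ ≤ φ z := by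
  have hst := slope_tendsto h (z - x)
  have hub : ∀ᶠ t : ℝ in 𝓝[>] (0:ℝ), (φ (x + t • (z - x)) - φ x) / t ≤ φ z - φ x := by
    filter_upwards [Ioo_mem_nhdsGT_of_mem (by norm_num : (0:ℝ) ∈ Set.Ico (0:ℝ) 1)] with t ht
    have h01 : 0 < t ∧ t < 1 := ⟨ht.1, ht.2⟩
    have hxz : x + t • (z - x) = (1 - t) • x + t • z := by
      rw [smul_sub, sub_smul, one_smul]; abel
    have := hφ.2 (Set.mem_univ x) (Set.mem_univ z) (by linarith : (0:ℝ) ≤ 1 - t)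
      (le_of_lt h01.1) (by ring)
    rw [hxz]
    rw [div_le_iff₀ h01.1]
    calc φ ((1-t) • x + t • z) - φ x ≤ ((1-t) * φ x + t * φ z) - φ x := by
          simpa [smul_eq_mul] using sub_le_sub_right this (φ x)
      _ = (φ z - φ x) * t := by ring
  have := le_of_tendsto hst hub
  linarith [this]

theorem subgrad_eq_grad {d : ℕ} {φ : Euc d → ℝ}
    {p x : Euc d} (h : HasGradientAt φ p x) {q : Euc d}
    (hq : ∀ z, φ x + ⟪q, z - x⟫ ≤ φ z) : q = p := by
  have key : ∀ v : Euc d, ⟪q, v⟫ ≤ ⟪p, v⟫ := by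
    intro v
    have hst := slope_tendsto h v
    have hlb : ∀ᶠ t : ℝ in 𝓝[>] (0:ℝ), ⟪q, v⟫ ≤ (φ (x + t • v) - φ x) / t := by
      filter_upwards [self_mem_nhdsWithin] with t ht
      have := hq (x + t • v)
      have h1 : t * ⟪q, v⟫ ≤ φ (x + t • v) - φ x := by
        have he : ⟪q, (x + t • v) - x⟫ = t * ⟪q, v⟫ := by
          rw [add_sub_cancel_left, real_inner_smul_right]
        have h0 := hq (x + t • v)
        rw [he] at h0
        linarith
      rw [le_div_iff₀ ht]
      linarith
    exact ge_of_tendsto hst hlb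
  have := key (q - p)
  have h2 : ⟪q - p, q - p⟫ ≤ 0 := by
    have e1 : ⟪q, q - p⟫ - ⟪p, q - p⟫ = ⟪q - p, q - p⟫ := by
      rw [inner_sub_left]
    linarith
  have := real_inner_self_nonpos.1 h2
  exact sub_eq_zero.1 this

def conjFn {d : ℕ} (φ : Euc d → ℝ) : Euc d → EReal :=
  fun y => ⨆ z : Euc d, ((⟪z, y⟫ - φ z : ℝ) : EReal)

theorem conjFn_measurable {d : ℕ} (φ : Euc d → ℝ) : Measurable (conjFn φ) := by
  have : LowerSemicontinuous (conjFn φ) := by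
    apply lowerSemicontinuous_iSup
    intro z
    exact (continuous_coe_real_ereal.comp
      ((continuous_const.inner continuous_id).sub continuous_const)).lowerSemicontinuous
  exact this.measurable

theorem le_conjFn {d : ℕ} (φ : Euc d → ℝ) (x y : Euc d) :
    ((⟪x, y⟫ - φ x : ℝ) : EReal) ≤ conjFn φ y :=
  le_iSup (fun z : Euc d => ((⟪z, y⟫ - φ z : ℝ) : EReal)) x

theorem conjFn_ne_bot {d : ℕ} (φ : Euc d → ℝ) (y : Euc d) : conjFn φ y ≠ ⊥ := by
  have h := le_conjFn φ 0 y
  intro hbot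
  rw [hbot] at h
  exact (EReal.coe_ne_bot _) (le_bot_iff.1 h)

theorem conjFn_at_subgrad {d : ℕ} {φ : Euc d → ℝ} {p x : Euc d}
    (hsub : ∀ z, φ x + ⟪p, z - x⟫ ≤ φ z) :
    conjFn φ p = ((⟪x, p⟫ - φ x : ℝ) : EReal) := by
  refine le_antisymm (iSup_le fun z => ?_) (le_conjFn φ x p)
  rw [EReal.coe_le_coe_iff]
  have h := hsub z
  have h2 : ⟪p, z - x⟫ = ⟪z, p⟫ - ⟪x, p⟫ := by
    rw [inner_sub_right, real_inner_comm p z, real_inner_comm p x]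
  rw [h2] at h
  linarith

theorem subgrad_of_conjFn_eq {d : ℕ} {φ : Euc d → ℝ} {p x : Euc d}
    (h : conjFn φ p = ((⟪x, p⟫ - φ x : ℝ) : EReal)) :
    ∀ z, φ x + ⟪p, z - x⟫ ≤ φ z := by
  intro z
  have h1 := le_conjFn φ z p
  rw [h, EReal.coe_le_coe_iff] at h1
  have h2 : ⟪p, z - x⟫ = ⟪z, p⟫ - ⟪x, p⟫ := by
    rw [inner_sub_right, real_inner_comm p z, real_inner_comm p x]
  rw [h2]
  linarith

theorem ae_eq_of_map_eq_of_le {α : Type*} [MeasurableSpace α] (μ : Measure α)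
    [IsFiniteMeasure μ] {F G : α → ℝ} (hF : Measurable F) (hG : Measurable G)
    (hmap : Measure.map F μ = Measure.map G μ) (hle : ∀ᵐ x ∂μ, G x ≤ F x) :
    F =ᵐ[μ] G := by
  have key : ∀ q : ℚ, ∀ᵐ x ∂μ, ¬ (G x ≤ (q:ℝ) ∧ (q:ℝ) < F x) := by
    intro q
    set A := {x | (q:ℝ) < F x} with hAdef
    set B := {x | (q:ℝ) < G x} with hBdef
    have hA : MeasurableSet A := measurableSet_lt measurable_const hF
    have hB : MeasurableSet B := measurableSet_lt measurable_const hG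
    have hμA : μ A = μ B := by
      have h1 : μ A = (Measure.map F μ) (Set.Ioi (q:ℝ)) := by
        rw [Measure.map_apply hF measurableSet_Ioi]; rfl
      have h2 : μ B = (Measure.map G μ) (Set.Ioi (q:ℝ)) := by
        rw [Measure.map_apply hG measurableSet_Ioi]; rfl
      rw [h1, h2, hmap]
    have hBA : μ (B \ A) = 0 := by
      refine measure_mono_null ?_ (ae_iff.1 hle)
      intro x hx
      obtain ⟨h1, h2⟩ := hx
      simp only [hAdef, Set.mem_setOf_eq, not_lt] at h2
      simp only [hBdef, Set.mem_setOf_eq] at h1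
      simp only [Set.mem_setOf_eq, not_le]
      exact lt_of_le_of_lt h2 h1
    have hBint : μ (B ∩ A) = μ B := by
      have := measure_diff_add_inter (μ := μ) B hA
      rw [hBA, zero_add] at this; exact this
    have hAB : μ (A \ B) = 0 := by
      have h1 := measure_diff_add_inter (μ := μ) A hB
      have h2 : μ (A \ B) + μ (A ∩ B) = 0 + μ (A ∩ B) := by
        rw [zero_add, h1, hμA, ← hBint, Set.inter_comm]
      have hfin : μ (A ∩ B) ≠ ⊤ :=
        (lt_of_le_of_lt (measure_mono Set.inter_subset_left) (measure_lt_top μ _)).ne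
      replace h2 : μ (A \ B) + μ (A ∩ B) = μ (A ∩ B) + 0 := by rw [h2]; ring
      rw [add_comm (μ (A \ B))] at h2
      exact (ENNReal.add_right_inj hfin).1 h2
    rw [ae_iff]
    refine measure_mono_null ?_ hAB
    intro x hx
    simp only [Set.mem_setOf_eq, not_not] at hx
    exact ⟨hx.2, fun hc => absurd hx.1 (not_le.2 hc)⟩
  rw [Filter.EventuallyEq]
  filter_upwards [hle, ae_all_iff.2 key] with x h1 h2
  by_contra hne
  have hlt : G x < F x := lt_of_le_of_ne h1 fun h => hne h.symm
  obtain ⟨q, hq1, hq2⟩ := exists_rat_btwn hlt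
  exact h2 q ⟨le_of_lt hq1, hq2⟩

theorem rankMap_unique {d : ℕ} (μ : Measure (Euc d)) [IsProbabilityMeasure μ]
    {R S : Euc d → Euc d} (hR : IsRankMap μ R) (hS : IsRankMap μ S) :
    ∀ᵐ x ∂μ, R x = S x := by
  obtain ⟨hRm, ⟨φ, hφ, hφg⟩, hRp⟩ := hR
  obtain ⟨hSm, ⟨ψ, hψ, hψg⟩, hSp⟩ := hS
  have hpush : Measure.map S μ = Measure.map R μ := by rw [hRp, hSp]
  have htopmeas : ∀ χ : Euc d → ℝ, MeasurableSet {y | conjFn χ y = ⊤} := fun χ =>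
    (conjFn_measurable χ) (measurableSet_singleton ⊤)
  have htop_transfer : ∀ (χ : Euc d → ℝ), (∀ᵐ x ∂μ, conjFn χ (R x) ≠ ⊤) →
      (∀ᵐ x ∂μ, conjFn χ (S x) ≠ ⊤) := by
    intro χ h
    have h1 : μ (R ⁻¹' {y | conjFn χ y = ⊤}) = 0 := by
      have := ae_iff.1 h
      simpa [Set.preimage, not_not] using this
    have h2 : μ (S ⁻¹' {y | conjFn χ y = ⊤}) = 0 := by
      rw [← Measure.map_apply hSm (htopmeas χ), hpush, Measure.map_apply hRm (htopmeas χ)]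
      exact h1
    rw [ae_iff]
    simpa [Set.preimage, not_not] using h2
  have htop_transfer' : ∀ (χ : Euc d → ℝ), (∀ᵐ x ∂μ, conjFn χ (S x) ≠ ⊤) →
      (∀ᵐ x ∂μ, conjFn χ (R x) ≠ ⊤) := by
    intro χ h
    have h1 : μ (S ⁻¹' {y | conjFn χ y = ⊤}) = 0 := by
      have := ae_iff.1 h
      simpa [Set.preimage, not_not] using this
    have h2 : μ (R ⁻¹' {y | conjFn χ y = ⊤}) = 0 := by
      rw [← Measure.map_apply hRm (htopmeas χ), ← hpush, Measure.map_apply hSm (htopmeas χ)]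
      exact h1
    rw [ae_iff]
    simpa [Set.preimage, not_not] using h2
  have hRφ : ∀ᵐ x ∂μ, conjFn φ (R x) = ((⟪x, R x⟫ - φ x : ℝ) : EReal) := by
    filter_upwards [hφg] with x hx
    exact conjFn_at_subgrad (convex_subgrad hφ hx)
  have hSψ : ∀ᵐ x ∂μ, conjFn ψ (S x) = ((⟪x, S x⟫ - ψ x : ℝ) : EReal) := by
    filter_upwards [hψg] with x hx
    exact conjFn_at_subgrad (convex_subgrad hψ hx)
  have hSφtop : ∀ᵐ x ∂μ, conjFn φ (S x) ≠ ⊤ := by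
    apply htop_transfer
    filter_upwards [hRφ] with x hx
    rw [hx]; exact EReal.coe_ne_top _
  have hRψtop : ∀ᵐ x ∂μ, conjFn ψ (R x) ≠ ⊤ := by
    apply htop_transfer'
    filter_upwards [hSψ] with x hx
    rw [hx]; exact EReal.coe_ne_top _
  set Hr : Euc d → ℝ := fun y => (conjFn φ y).toReal - (conjFn ψ y).toReal with hHr
  have hHrm : Measurable Hr :=
    ((conjFn_measurable φ).ereal_toReal).sub ((conjFn_measurable ψ).ereal_toReal)
  have hmapH : Measure.map (fun x => Hr (S x)) μ = Measure.map (fun x => Hr (R x)) μ := by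
    have e1 : Measure.map (fun x => Hr (S x)) μ = Measure.map Hr (Measure.map S μ) :=
      (Measure.map_map hHrm hSm).symm
    have e2 : Measure.map (fun x => Hr (R x)) μ = Measure.map Hr (Measure.map R μ) :=
      (Measure.map_map hHrm hRm).symm
    rw [e1, e2, hpush]
  have hbounds : ∀ᵐ x ∂μ, (Hr (R x) ≤ ψ x - φ x ∧ ψ x - φ x ≤ Hr (S x)) := by
    filter_upwards [hRφ, hSψ, hSφtop, hRψtop] with x e1 e2 h3 h4
    constructor
    · have l2 : ⟪x, R x⟫ - ψ x ≤ (conjFn ψ (R x)).toReal := by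
        have hle := le_conjFn ψ x (R x)
        have := EReal.toReal_le_toReal hle (EReal.coe_ne_bot _) h4
        rwa [EReal.toReal_coe] at this
      simp only [hHr, e1, EReal.toReal_coe]
      linarith
    · have l1 : ⟪x, S x⟫ - φ x ≤ (conjFn φ (S x)).toReal := by
        have hle := le_conjFn φ x (S x)
        have := EReal.toReal_le_toReal hle (EReal.coe_ne_bot _) h3
        rwa [EReal.toReal_coe] at this
      simp only [hHr, e2, EReal.toReal_coe]
      linarith
  have hdom : ∀ᵐ x ∂μ, Hr (R x) ≤ Hr (S x) := by
    filter_upwards [hbounds] with x hx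
    linarith [hx.1, hx.2]
  have heq : (fun x => Hr (S x)) =ᵐ[μ] (fun x => Hr (R x)) :=
    ae_eq_of_map_eq_of_le μ (hHrm.comp hSm) (hHrm.comp hRm) hmapH hdom
  filter_upwards [hφg, hbounds, heq, hSφtop, hSψ] with x h1 hb h5 h3 e2
  have hHeq : Hr (S x) = ψ x - φ x := le_antisymm (by rw [h5]; exact hb.1) hb.2
  have htoReal : (conjFn φ (S x)).toReal = ⟪x, S x⟫ - φ x := by
    have : Hr (S x) = (conjFn φ (S x)).toReal - (⟪x, S x⟫ - ψ x) := by
      simp only [hHr, e2, EReal.toReal_coe]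
    rw [this] at hHeq
    linarith
  have hconj : conjFn φ (S x) = ((⟪x, S x⟫ - φ x : ℝ) : EReal) := by
    rw [← htoReal]
    exact (EReal.coe_toReal h3 (conjFn_ne_bot φ _)).symm
  exact (subgrad_eq_grad h1 (subgrad_of_conjFn_eq hconj)).symm

end Aux
-- ===== affine equivariance lemmas =====

section Aff
open scoped RealInnerProductSpace

theorem affine_convex {d : ℕ} {φ : Euc d → ℝ} (hφ : ConvexOn ℝ Set.univ φ)
    (a : Euc d) {b : ℝ} (hb : 0 < b) :
    ConvexOn ℝ Set.univ (fun y => b * φ (b⁻¹ • (y - a))) := by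
  refine ⟨convex_univ, fun x _ y _ s t hs ht hst => ?_⟩
  have hco : b⁻¹ • (s • x + t • y - a) = s • (b⁻¹ • (x - a)) + t • (b⁻¹ • (y - a)) := by
    have ha : s • a + t • a = a := by rw [← add_smul, hst, one_smul]
    have : s • x + t • y - a = s • (x - a) + t • (y - a) := by
      calc s • x + t • y - a = s • x + t • y - (s • a + t • a) := by rw [ha]
        _ = s • (x - a) + t • (y - a) := by rw [smul_sub, smul_sub]; abel
    rw [this, smul_add, smul_comm b⁻¹ s, smul_comm b⁻¹ t]
  simp only []
  show b * φ (b⁻¹ • (s • x + t • y - a))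
      ≤ s • (b * φ (b⁻¹ • (x - a))) + t • (b * φ (b⁻¹ • (y - a)))
  rw [hco]
  have := hφ.2 (Set.mem_univ (b⁻¹ • (x - a))) (Set.mem_univ (b⁻¹ • (y - a))) hs ht hst
  calc b * φ (s • (b⁻¹ • (x - a)) + t • (b⁻¹ • (y - a)))
      ≤ b * (s * φ (b⁻¹ • (x - a)) + t * φ (b⁻¹ • (y - a))) := by
        exact mul_le_mul_of_nonneg_left (by simpa [smul_eq_mul] using this) hb.le
    _ = s • (b * φ (b⁻¹ • (x - a))) + t • (b * φ (b⁻¹ • (y - a))) := by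
        simp [smul_eq_mul]; ring

theorem affine_gradient {d : ℕ} {φ : Euc d → ℝ} {p z : Euc d}
    (h : HasGradientAt φ p z) (a : Euc d) {b : ℝ} (hb : 0 < b) :
    HasGradientAt (fun y => b * φ (b⁻¹ • (y - a))) p (a + b • z) := by
  rw [hasGradientAt_iff_hasFDerivAt] at h ⊢
  set L := (InnerProductSpace.toDual ℝ (Euc d)) p with hL
  have hA : ∀ x : Euc d, HasFDerivAt (fun y : Euc d => b⁻¹ • (y - a))
      (b⁻¹ • ContinuousLinearMap.id ℝ (Euc d)) x := by
    intro x
    exact ((hasFDerivAt_id x).sub_const a).const_smul b⁻¹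
  have hAval : b⁻¹ • ((a + b • z) - a) = z := by
    rw [add_sub_cancel_left, smul_smul, inv_mul_cancel₀ hb.ne', one_smul]
  have hφA : HasFDerivAt (fun y : Euc d => φ (b⁻¹ • (y - a)))
      (L.comp (b⁻¹ • ContinuousLinearMap.id ℝ (Euc d))) (a + b • z) := by
    have hφ' : HasFDerivAt φ L (b⁻¹ • ((a + b • z) - a)) := by rw [hAval]; exact h
    exact hφ'.comp (a + b • z) (hA (a + b • z))
  have := hφA.const_mul b
  have hLeq : b • (L.comp (b⁻¹ • ContinuousLinearMap.id ℝ (Euc d))) = L := by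
    ext v
    simp [smul_smul, mul_inv_cancel₀ hb.ne']
  rw [← hLeq]
  exact this

def affEquiv {d : ℕ} (a : Euc d) {b : ℝ} (hb : b ≠ 0) : Euc d ≃ᵐ Euc d :=
  ((Homeomorph.smulOfNeZero b hb).trans (Homeomorph.addLeft a)).toMeasurableEquiv

theorem measurable_affinv {d : ℕ} (a : Euc d) (b : ℝ) :
    Measurable (fun x : Euc d => b⁻¹ • (x - a)) :=
  (measurable_id.sub measurable_const).const_smul b⁻¹

theorem measurable_aff {d : ℕ} (a : Euc d) (b : ℝ) :
    Measurable (fun y : Euc d => a + b • y) :=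
  measurable_const.add (measurable_id.const_smul b)

theorem aff_left_inv {d : ℕ} (a : Euc d) {b : ℝ} (hb : b ≠ 0) (y : Euc d) :
    b⁻¹ • ((a + b • y) - a) = y := by
  rw [add_sub_cancel_left, smul_smul, inv_mul_cancel₀ hb, one_smul]

theorem affine_rank {d : ℕ} (μ : Measure (Euc d)) [IsProbabilityMeasure μ]
    (R : Euc d → Euc d) (hRmeas : Measurable R)
    (φ : Euc d → ℝ) (hφ : ConvexOn ℝ Set.univ φ)
    (hgrad : ∀ᵐ x ∂μ, HasGradientAt φ (R x) x)
    (hpush : Measure.map R μ = unifCube d)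
    (a : Euc d) {b : ℝ} (hb : 0 < b) :
    ConvexOn ℝ Set.univ (fun y => b * φ (b⁻¹ • (y - a))) ∧
      (∀ᵐ x ∂ Measure.map (fun y => a + b • y) μ,
        HasGradientAt (fun y => b * φ (b⁻¹ • (y - a))) (R (b⁻¹ • (x - a))) x) ∧
      Measure.map (fun x => R (b⁻¹ • (x - a))) (Measure.map (fun y => a + b • y) μ)
        = unifCube d := by
  refine ⟨affine_convex hφ a hb, ?_, ?_⟩
  · have h : ∀ᵐ y ∂μ, HasGradientAt (fun y => b * φ (b⁻¹ • (y - a)))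
        (R (b⁻¹ • ((a + b • y) - a))) (a + b • y) := by
      filter_upwards [hgrad] with y hy
      rw [aff_left_inv a hb.ne']
      exact affine_gradient hy a hb
    have hmapae := MeasurableEquiv.map_ae (affEquiv a hb.ne') μ
    have hcoe : (⇑(affEquiv a hb.ne') : Euc d → Euc d) = fun y => a + b • y := rfl
    rw [hcoe] at hmapae
    rw [← hmapae, Filter.eventually_map]
    exact h
  · have h1 : Measurable (fun x : Euc d => R (b⁻¹ • (x - a))) :=
      hRmeas.comp (measurable_affinv a b)
    have hmm := Measure.map_map (μ := μ) (g := fun x : Euc d => R (b⁻¹ • (x - a)))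
      (f := fun y : Euc d => a + b • y) h1 (measurable_aff a b)
    rw [hmm]
    have hcomp : ((fun x => R (b⁻¹ • (x - a))) ∘ (fun y : Euc d => a + b • y)) = R := by
      funext y
      simp only [Function.comp_apply, aff_left_inv a hb.ne']
    rw [hcomp, hpush]

end Aff
-- ===== RdCovSq transformation lemmas =====

section Rd

theorem ae_fst_proj {dA dB : ℕ} (M : Measure (Euc dA × Euc dB)) {μA : Measure (Euc dA)}
    (hfst : Measure.map Prod.fst M = μA) {F G : Euc dA → Euc dA}
    (hF : Measurable F) (hG : Measurable G)
    (h : ∀ᵐ x ∂μA, F x = G x) : ∀ᵐ p ∂M, F p.1 = G p.1 := by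
  rw [ae_iff]
  have hbad : MeasurableSet {x : Euc dA | ¬ F x = G x} :=
    (hF.stronglyMeasurable.measurableSet_eq_fun hG.stronglyMeasurable).compl
  have hset : {p : Euc dA × Euc dB | ¬ F p.1 = G p.1}
      = Prod.fst ⁻¹' {x : Euc dA | ¬ F x = G x} := rfl
  rw [hset, ← Measure.map_apply measurable_fst hbad, hfst]
  exact ae_iff.1 h

theorem ae_snd_proj {dA dB : ℕ} (M : Measure (Euc dA × Euc dB)) {μB : Measure (Euc dB)}
    (hsnd : Measure.map Prod.snd M = μB) {F G : Euc dB → Euc dB}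
    (hF : Measurable F) (hG : Measurable G)
    (h : ∀ᵐ x ∂μB, F x = G x) : ∀ᵐ p ∂M, F p.2 = G p.2 := by
  rw [ae_iff]
  have hbad : MeasurableSet {x : Euc dB | ¬ F x = G x} :=
    (hF.stronglyMeasurable.measurableSet_eq_fun hG.stronglyMeasurable).compl
  have hset : {p : Euc dA × Euc dB | ¬ F p.2 = G p.2}
      = Prod.snd ⁻¹' {x : Euc dB | ¬ F x = G x} := rfl
  rw [hset, ← Measure.map_apply measurable_snd hbad, hsnd]
  exact ae_iff.1 h

theorem RdCovSq_congr {d₁ d₂ : ℕ} (ν : Measure (Euc d₁ × Euc d₂)) [IsProbabilityMeasure ν]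
    {R₁ S₁ : Euc d₁ → Euc d₁} {R₂ S₂ : Euc d₂ → Euc d₂}
    (hR₁ : Measurable R₁) (hS₁ : Measurable S₁) (hR₂ : Measurable R₂) (hS₂ : Measurable S₂)
    (h₁ : ∀ᵐ p ∂ν, R₁ p.1 = S₁ p.1) (h₂ : ∀ᵐ p ∂ν, R₂ p.2 = S₂ p.2) :
    RdCovSq ν R₁ R₂ = RdCovSq ν S₁ S₂ := by
  have hbad₁ : MeasurableSet {q : Euc d₁ × Euc d₂ | ¬ R₁ q.1 = S₁ q.1} :=
    ((hR₁.comp measurable_fst).stronglyMeasurable.measurableSet_eq_fun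
      (hS₁.comp measurable_fst).stronglyMeasurable).compl
  have hbad₂ : MeasurableSet {q : Euc d₁ × Euc d₂ | ¬ R₂ q.2 = S₂ q.2} :=
    ((hR₂.comp measurable_snd).stronglyMeasurable.measurableSet_eq_fun
      (hS₂.comp measurable_snd).stronglyMeasurable).compl
  have key : ∀ {γ : Type} [inst : MeasurableSpace γ] (M : Measure γ)
      (π : γ → Euc d₁ × Euc d₂), Measurable π → Measure.map π M = ν →
      (∀ᵐ p ∂M, R₁ (π p).1 = S₁ (π p).1) ∧ (∀ᵐ p ∂M, R₂ (π p).2 = S₂ (π p).2) := by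
    intro γ inst M π hπ hmap
    constructor
    · rw [ae_iff]
      have hset : {p : γ | ¬ R₁ (π p).1 = S₁ (π p).1}
          = π ⁻¹' {q : Euc d₁ × Euc d₂ | ¬ R₁ q.1 = S₁ q.1} := rfl
      rw [hset, ← Measure.map_apply hπ hbad₁, hmap]
      exact ae_iff.1 h₁
    · rw [ae_iff]
      have hset : {p : γ | ¬ R₂ (π p).2 = S₂ (π p).2}
          = π ⁻¹' {q : Euc d₁ × Euc d₂ | ¬ R₂ q.2 = S₂ q.2} := rfl
      rw [hset, ← Measure.map_apply hπ hbad₂, hmap]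
      exact ae_iff.1 h₂
  have hfst2 : Measure.map Prod.fst (ν.prod ν) = ν := by simp
  have hsnd2 : Measure.map Prod.snd (ν.prod ν) = ν := by simp
  have hfst3 : Measure.map Prod.fst (ν.prod (ν.prod ν)) = ν := by simp
  have hsnd3 : Measure.map Prod.snd (ν.prod (ν.prod ν)) = ν.prod ν := by simp
  have hmidπ : Measure.map (fun p : (Euc d₁ × Euc d₂) × (Euc d₁ × Euc d₂) × (Euc d₁ × Euc d₂)
      => p.2.1) (ν.prod (ν.prod ν)) = ν := by
    have hset : (fun p : (Euc d₁ × Euc d₂) × (Euc d₁ × Euc d₂) × (Euc d₁ × Euc d₂) => p.2.1)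
        = Prod.fst ∘ Prod.snd := rfl
    rw [hset, ← Measure.map_map measurable_fst measurable_snd, hsnd3, hfst2]
  have hlastπ : Measure.map (fun p : (Euc d₁ × Euc d₂) × (Euc d₁ × Euc d₂) × (Euc d₁ × Euc d₂)
      => p.2.2) (ν.prod (ν.prod ν)) = ν := by
    have hset : (fun p : (Euc d₁ × Euc d₂) × (Euc d₁ × Euc d₂) × (Euc d₁ × Euc d₂) => p.2.2)
        = Prod.snd ∘ Prod.snd := rfl
    rw [hset, ← Measure.map_map measurable_snd measurable_snd, hsnd3, hsnd2]
  obtain ⟨k2f1, k2f2⟩ := key (ν.prod ν) Prod.fst measurable_fst hfst2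
  obtain ⟨k2s1, k2s2⟩ := key (ν.prod ν) Prod.snd measurable_snd hsnd2
  obtain ⟨k3f1, k3f2⟩ := key (ν.prod (ν.prod ν)) Prod.fst measurable_fst hfst3
  obtain ⟨k3m1, _⟩ := key (ν.prod (ν.prod ν)) _ (measurable_fst.comp measurable_snd) hmidπ
  obtain ⟨_, k3l2⟩ := key (ν.prod (ν.prod ν)) _ (measurable_snd.comp measurable_snd) hlastπ
  unfold RdCovSq
  have e1 : (∫ p : (Euc d₁ × Euc d₂) × (Euc d₁ × Euc d₂),
      ‖R₁ p.1.1 - R₁ p.2.1‖ * ‖R₂ p.1.2 - R₂ p.2.2‖ ∂ ν.prod ν)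
      = ∫ p : (Euc d₁ × Euc d₂) × (Euc d₁ × Euc d₂),
      ‖S₁ p.1.1 - S₁ p.2.1‖ * ‖S₂ p.1.2 - S₂ p.2.2‖ ∂ ν.prod ν := by
    apply integral_congr_ae
    filter_upwards [k2f1, k2f2, k2s1, k2s2] with p a b c e
    rw [a, b, c, e]
  have e2 : (∫ p : (Euc d₁ × Euc d₂) × (Euc d₁ × Euc d₂), ‖R₁ p.1.1 - R₁ p.2.1‖ ∂ ν.prod ν)
      = ∫ p : (Euc d₁ × Euc d₂) × (Euc d₁ × Euc d₂), ‖S₁ p.1.1 - S₁ p.2.1‖ ∂ ν.prod ν := by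
    apply integral_congr_ae
    filter_upwards [k2f1, k2s1] with p a b
    rw [a, b]
  have e3 : (∫ p : (Euc d₁ × Euc d₂) × (Euc d₁ × Euc d₂), ‖R₂ p.1.2 - R₂ p.2.2‖ ∂ ν.prod ν)
      = ∫ p : (Euc d₁ × Euc d₂) × (Euc d₁ × Euc d₂), ‖S₂ p.1.2 - S₂ p.2.2‖ ∂ ν.prod ν := by
    apply integral_congr_ae
    filter_upwards [k2f2, k2s2] with p a b
    rw [a, b]
  have e4 : (∫ p : (Euc d₁ × Euc d₂) × (Euc d₁ × Euc d₂) × (Euc d₁ × Euc d₂),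
      ‖R₁ p.1.1 - R₁ p.2.1.1‖ * ‖R₂ p.1.2 - R₂ p.2.2.2‖ ∂ ν.prod (ν.prod ν))
      = ∫ p : (Euc d₁ × Euc d₂) × (Euc d₁ × Euc d₂) × (Euc d₁ × Euc d₂),
      ‖S₁ p.1.1 - S₁ p.2.1.1‖ * ‖S₂ p.1.2 - S₂ p.2.2.2‖ ∂ ν.prod (ν.prod ν) := by
    apply integral_congr_ae
    filter_upwards [k3f1, k3f2, k3m1, k3l2] with p a b c e
    simp only [Function.comp_apply] at c e
    rw [a, b, c, e]
  rw [e1, e2, e3, e4]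

theorem RdCovSq_map {d₁ d₂ : ℕ} (ν : Measure (Euc d₁ × Euc d₂)) [IsProbabilityMeasure ν]
    (T₁ : Euc d₁ → Euc d₁) (T₂ : Euc d₂ → Euc d₂) (hT₁ : Measurable T₁) (hT₂ : Measurable T₂)
    {S₁ R₁ : Euc d₁ → Euc d₁} {S₂ R₂ : Euc d₂ → Euc d₂}
    (hS₁ : Measurable S₁) (hS₂ : Measurable S₂)
    (hc₁ : ∀ z, S₁ (T₁ z) = R₁ z) (hc₂ : ∀ z, S₂ (T₂ z) = R₂ z) :
    RdCovSq (Measure.map (Prod.map T₁ T₂) ν) S₁ S₂ = RdCovSq ν R₁ R₂ := by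
  set G := Prod.map T₁ T₂ with hG
  have hGm : Measurable G := hT₁.prodMap hT₂
  have h2 : (Measure.map G ν).prod (Measure.map G ν)
      = Measure.map (Prod.map G G) (ν.prod ν) := Measure.map_prod_map ν ν hGm hGm
  have h3 : (Measure.map G ν).prod ((Measure.map G ν).prod (Measure.map G ν))
      = Measure.map (Prod.map G (Prod.map G G)) (ν.prod (ν.prod ν)) := by
    rw [h2]
    exact Measure.map_prod_map ν (ν.prod ν) hGm (hGm.prodMap hGm)
  have hmes1 : Measurable (fun p : (Euc d₁ × Euc d₂) × (Euc d₁ × Euc d₂) =>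
      ‖S₁ p.1.1 - S₁ p.2.1‖ * ‖S₂ p.1.2 - S₂ p.2.2‖) :=
    (((hS₁.comp (measurable_fst.comp measurable_fst)).sub
      (hS₁.comp (measurable_fst.comp measurable_snd))).norm).mul
    (((hS₂.comp (measurable_snd.comp measurable_fst)).sub
      (hS₂.comp (measurable_snd.comp measurable_snd))).norm)
  have hmesA : Measurable (fun p : (Euc d₁ × Euc d₂) × (Euc d₁ × Euc d₂) =>
      ‖S₁ p.1.1 - S₁ p.2.1‖) :=
    ((hS₁.comp (measurable_fst.comp measurable_fst)).sub
      (hS₁.comp (measurable_fst.comp measurable_snd))).norm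
  have hmesB : Measurable (fun p : (Euc d₁ × Euc d₂) × (Euc d₁ × Euc d₂) =>
      ‖S₂ p.1.2 - S₂ p.2.2‖) :=
    ((hS₂.comp (measurable_snd.comp measurable_fst)).sub
      (hS₂.comp (measurable_snd.comp measurable_snd))).norm
  have hmes4 : Measurable (fun p : (Euc d₁ × Euc d₂) × (Euc d₁ × Euc d₂) × (Euc d₁ × Euc d₂) =>
      ‖S₁ p.1.1 - S₁ p.2.1.1‖ * ‖S₂ p.1.2 - S₂ p.2.2.2‖) := by
    fun_prop
  unfold RdCovSq
  have e1 : (∫ p : (Euc d₁ × Euc d₂) × (Euc d₁ × Euc d₂),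
      ‖S₁ p.1.1 - S₁ p.2.1‖ * ‖S₂ p.1.2 - S₂ p.2.2‖
        ∂ (Measure.map G ν).prod (Measure.map G ν))
      = ∫ p : (Euc d₁ × Euc d₂) × (Euc d₁ × Euc d₂),
      ‖R₁ p.1.1 - R₁ p.2.1‖ * ‖R₂ p.1.2 - R₂ p.2.2‖ ∂ ν.prod ν := by
    rw [h2, integral_map (hGm.prodMap hGm).aemeasurable hmes1.aestronglyMeasurable]
    apply integral_congr_ae
    apply Filter.Eventually.of_forall
    intro p
    simp only [hG, Prod.map_fst, Prod.map_snd, hc₁, hc₂]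
  have e2 : (∫ p : (Euc d₁ × Euc d₂) × (Euc d₁ × Euc d₂), ‖S₁ p.1.1 - S₁ p.2.1‖
        ∂ (Measure.map G ν).prod (Measure.map G ν))
      = ∫ p : (Euc d₁ × Euc d₂) × (Euc d₁ × Euc d₂), ‖R₁ p.1.1 - R₁ p.2.1‖ ∂ ν.prod ν := by
    rw [h2, integral_map (hGm.prodMap hGm).aemeasurable hmesA.aestronglyMeasurable]
    apply integral_congr_ae
    apply Filter.Eventually.of_forall
    intro p
    simp only [hG, Prod.map_fst, Prod.map_snd, hc₁]
  have e3 : (∫ p : (Euc d₁ × Euc d₂) × (Euc d₁ × Euc d₂), ‖S₂ p.1.2 - S₂ p.2.2‖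
        ∂ (Measure.map G ν).prod (Measure.map G ν))
      = ∫ p : (Euc d₁ × Euc d₂) × (Euc d₁ × Euc d₂), ‖R₂ p.1.2 - R₂ p.2.2‖ ∂ ν.prod ν := by
    rw [h2, integral_map (hGm.prodMap hGm).aemeasurable hmesB.aestronglyMeasurable]
    apply integral_congr_ae
    apply Filter.Eventually.of_forall
    intro p
    simp only [hG, Prod.map_fst, Prod.map_snd, hc₂]
  have e4 : (∫ p : (Euc d₁ × Euc d₂) × (Euc d₁ × Euc d₂) × (Euc d₁ × Euc d₂),
      ‖S₁ p.1.1 - S₁ p.2.1.1‖ * ‖S₂ p.1.2 - S₂ p.2.2.2‖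
        ∂ (Measure.map G ν).prod ((Measure.map G ν).prod (Measure.map G ν)))
      = ∫ p : (Euc d₁ × Euc d₂) × (Euc d₁ × Euc d₂) × (Euc d₁ × Euc d₂),
      ‖R₁ p.1.1 - R₁ p.2.1.1‖ * ‖R₂ p.1.2 - R₂ p.2.2.2‖ ∂ ν.prod (ν.prod ν) := by
    rw [h3, integral_map (hGm.prodMap (hGm.prodMap hGm)).aemeasurable
      hmes4.aestronglyMeasurable]
    apply integral_congr_ae
    apply Filter.Eventually.of_forall
    intro p
    simp only [hG, Prod.map_fst, Prod.map_snd, hc₁, hc₂]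
  rw [e1, e2, e3, e4]

end Rd

/-- Equivariance of rank maps under positive scalings and translations, and the resulting
invariance of the rank distance covariance: if `R = ∇φ` `μ`-a.e. is a rank map of `μ`, then
`x ↦ R((x−a)/b)` is a rank map of the pushforward of `μ` under `x ↦ a + b x` (with convex
potential `x ↦ b·φ((x−a)/b)`); consequently `RdCov²` is invariant under such transformations
of each coordinate, computed with any rank maps of the transformed marginals. -/
theorem stmt6
    {d : ℕ} (μ : Measure (Euc d)) [IsProbabilityMeasure μ] (hac : μ ≪ volume)
    (R : Euc d → Euc d) (hRmeas : Measurable R)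
    (φ : Euc d → ℝ) (hφ : ConvexOn ℝ Set.univ φ)
    (hgrad : ∀ᵐ x ∂μ, HasGradientAt φ (R x) x)
    (hpush : Measure.map R μ = unifCube d)
    (a : Euc d) (b : ℝ) (hb : 0 < b) :
    (ConvexOn ℝ Set.univ (fun y => b * φ (b⁻¹ • (y - a))) ∧
      (∀ᵐ x ∂ Measure.map (fun y => a + b • y) μ,
        HasGradientAt (fun y => b * φ (b⁻¹ • (y - a))) (R (b⁻¹ • (x - a))) x) ∧
      Measure.map (fun x => R (b⁻¹ • (x - a))) (Measure.map (fun y => a + b • y) μ)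
        = unifCube d) ∧
    (∀ (d₁ d₂ : ℕ) (Ω : Type) [MeasurableSpace Ω] (P : Measure Ω),
      IsProbabilityMeasure P →
      ∀ (Z₁ : Ω → Euc d₁) (Z₂ : Ω → Euc d₂), Measurable Z₁ → Measurable Z₂ →
      Measure.map Z₁ P ≪ volume → Measure.map Z₂ P ≪ volume →
      ∀ (a₁ : Euc d₁) (a₂ : Euc d₂) (b₁ b₂ : ℝ), 0 < b₁ → 0 < b₂ →
      ∀ (R₁ : Euc d₁ → Euc d₁) (R₂ : Euc d₂ → Euc d₂),
        IsRankMap (Measure.map Z₁ P) R₁ → IsRankMap (Measure.map Z₂ P) R₂ →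
      ∀ (R₁' : Euc d₁ → Euc d₁) (R₂' : Euc d₂ → Euc d₂),
        IsRankMap (Measure.map (fun ω => a₁ + b₁ • Z₁ ω) P) R₁' →
        IsRankMap (Measure.map (fun ω => a₂ + b₂ • Z₂ ω) P) R₂' →
        RdCovSq (Measure.map (fun ω => (a₁ + b₁ • Z₁ ω, a₂ + b₂ • Z₂ ω)) P) R₁' R₂'
          = RdCovSq (Measure.map (fun ω => (Z₁ ω, Z₂ ω)) P) R₁ R₂) := by
  constructor
  · exact affine_rank μ R hRmeas φ hφ hgrad hpush a hb
  · intro d₁ d₂ Ω mΩ P hP Z₁ Z₂ hZ₁ hZ₂ _hac₁ _hac₂ a₁ a₂ b₁ b₂ hb₁ hb₂ R₁ R₂ hRk₁ hRk₂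
      R₁' R₂' hRk₁' hRk₂'
    haveI := hP
    haveI i1 : IsProbabilityMeasure (Measure.map Z₁ P) :=
      Measure.isProbabilityMeasure_map hZ₁.aemeasurable
    haveI i2 : IsProbabilityMeasure (Measure.map Z₂ P) :=
      Measure.isProbabilityMeasure_map hZ₂.aemeasurable
    haveI i1' : IsProbabilityMeasure
        (Measure.map (fun y : Euc d₁ => a₁ + b₁ • y) (Measure.map Z₁ P)) :=
      Measure.isProbabilityMeasure_map (measurable_aff a₁ b₁).aemeasurable
    haveI i2' : IsProbabilityMeasure
        (Measure.map (fun y : Euc d₂ => a₂ + b₂ • y) (Measure.map Z₂ P)) :=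
      Measure.isProbabilityMeasure_map (measurable_aff a₂ b₂).aemeasurable
    have hm₁ : Measure.map (fun ω => a₁ + b₁ • Z₁ ω) P
        = Measure.map (fun y : Euc d₁ => a₁ + b₁ • y) (Measure.map Z₁ P) :=
      (Measure.map_map (measurable_aff a₁ b₁) hZ₁).symm
    have hm₂ : Measure.map (fun ω => a₂ + b₂ • Z₂ ω) P
        = Measure.map (fun y : Euc d₂ => a₂ + b₂ • y) (Measure.map Z₂ P) :=
      (Measure.map_map (measurable_aff a₂ b₂) hZ₂).symm
    obtain ⟨hR₁m, ⟨φ₁, hφ₁, hg₁⟩, hp₁⟩ := hRk₁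
    obtain ⟨hR₂m, ⟨φ₂, hφ₂, hg₂⟩, hp₂⟩ := hRk₂
    obtain ⟨c₁, g₁, p₁⟩ := affine_rank (Measure.map Z₁ P) R₁ hR₁m φ₁ hφ₁ hg₁ hp₁ a₁ hb₁
    obtain ⟨c₂, g₂, p₂⟩ := affine_rank (Measure.map Z₂ P) R₂ hR₂m φ₂ hφ₂ hg₂ hp₂ a₂ hb₂
    have hS₁m : Measurable (fun x : Euc d₁ => R₁ (b₁⁻¹ • (x - a₁))) :=
      hR₁m.comp (measurable_affinv a₁ b₁)
    have hS₂m : Measurable (fun x : Euc d₂ => R₂ (b₂⁻¹ • (x - a₂))) :=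
      hR₂m.comp (measurable_affinv a₂ b₂)
    have hRank₁'' : IsRankMap (Measure.map (fun y : Euc d₁ => a₁ + b₁ • y) (Measure.map Z₁ P))
        (fun x => R₁ (b₁⁻¹ • (x - a₁))) := ⟨hS₁m, ⟨_, c₁, g₁⟩, p₁⟩
    have hRank₂'' : IsRankMap (Measure.map (fun y : Euc d₂ => a₂ + b₂ • y) (Measure.map Z₂ P))
        (fun x => R₂ (b₂⁻¹ • (x - a₂))) := ⟨hS₂m, ⟨_, c₂, g₂⟩, p₂⟩
    have hR₁'m : Measurable R₁' := hRk₁'.1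
    have hR₂'m : Measurable R₂' := hRk₂'.1
    have hRank₁' : IsRankMap (Measure.map (fun y : Euc d₁ => a₁ + b₁ • y) (Measure.map Z₁ P))
        R₁' := by rwa [hm₁] at hRk₁'
    have hRank₂' : IsRankMap (Measure.map (fun y : Euc d₂ => a₂ + b₂ • y) (Measure.map Z₂ P))
        R₂' := by rwa [hm₂] at hRk₂'
    have hu₁ := rankMap_unique _ hRank₁' hRank₁''
    have hu₂ := rankMap_unique _ hRank₂' hRank₂''
    -- joint law manipulations
    have hpairm : Measurable (fun ω => (Z₁ ω, Z₂ ω)) := hZ₁.prodMk hZ₂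
    haveI iν : IsProbabilityMeasure (Measure.map (fun ω => (Z₁ ω, Z₂ ω)) P) :=
      Measure.isProbabilityMeasure_map hpairm.aemeasurable
    have hG : Measurable (Prod.map (fun y : Euc d₁ => a₁ + b₁ • y)
        (fun y : Euc d₂ => a₂ + b₂ • y)) :=
      (measurable_aff a₁ b₁).prodMap (measurable_aff a₂ b₂)
    have hjoint : Measure.map (fun ω => (a₁ + b₁ • Z₁ ω, a₂ + b₂ • Z₂ ω)) P
        = Measure.map (Prod.map (fun y : Euc d₁ => a₁ + b₁ • y) (fun y : Euc d₂ => a₂ + b₂ • y))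
            (Measure.map (fun ω => (Z₁ ω, Z₂ ω)) P) :=
      (Measure.map_map hG hpairm).symm
    haveI iν' : IsProbabilityMeasure (Measure.map (Prod.map (fun y : Euc d₁ => a₁ + b₁ • y)
        (fun y : Euc d₂ => a₂ + b₂ • y)) (Measure.map (fun ω => (Z₁ ω, Z₂ ω)) P)) :=
      Measure.isProbabilityMeasure_map hG.aemeasurable
    have hmarg1 : Measure.map Prod.fst (Measure.map (Prod.map (fun y : Euc d₁ => a₁ + b₁ • y)
        (fun y : Euc d₂ => a₂ + b₂ • y)) (Measure.map (fun ω => (Z₁ ω, Z₂ ω)) P))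
        = Measure.map (fun y : Euc d₁ => a₁ + b₁ • y) (Measure.map Z₁ P) := by
      rw [Measure.map_map measurable_fst hG]
      have hc : (Prod.fst ∘ Prod.map (fun y : Euc d₁ => a₁ + b₁ • y)
          (fun y : Euc d₂ => a₂ + b₂ • y))
          = ((fun y : Euc d₁ => a₁ + b₁ • y) ∘ Prod.fst) := rfl
      rw [hc, ← Measure.map_map (measurable_aff a₁ b₁) measurable_fst]
      congr 1
      rw [Measure.map_map measurable_fst hpairm]
      have hcz : (Prod.fst ∘ fun ω => (Z₁ ω, Z₂ ω)) = Z₁ := rfl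
      rw [hcz]
    have hmarg2 : Measure.map Prod.snd (Measure.map (Prod.map (fun y : Euc d₁ => a₁ + b₁ • y)
        (fun y : Euc d₂ => a₂ + b₂ • y)) (Measure.map (fun ω => (Z₁ ω, Z₂ ω)) P))
        = Measure.map (fun y : Euc d₂ => a₂ + b₂ • y) (Measure.map Z₂ P) := by
      rw [Measure.map_map measurable_snd hG]
      have hc : (Prod.snd ∘ Prod.map (fun y : Euc d₁ => a₁ + b₁ • y)
          (fun y : Euc d₂ => a₂ + b₂ • y))
          = ((fun y : Euc d₂ => a₂ + b₂ • y) ∘ Prod.snd) := rfl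
      rw [hc, ← Measure.map_map (measurable_aff a₂ b₂) measurable_snd]
      congr 1
      rw [Measure.map_map measurable_snd hpairm]
      have hcz : (Prod.snd ∘ fun ω => (Z₁ ω, Z₂ ω)) = Z₂ := rfl
      rw [hcz]
    rw [hjoint]
    have stepA := RdCovSq_congr
      (Measure.map (Prod.map (fun y : Euc d₁ => a₁ + b₁ • y) (fun y : Euc d₂ => a₂ + b₂ • y))
        (Measure.map (fun ω => (Z₁ ω, Z₂ ω)) P))
      hR₁'m hS₁m hR₂'m hS₂m
      (ae_fst_proj _ hmarg1 hR₁'m hS₁m hu₁)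
      (ae_snd_proj _ hmarg2 hR₂'m hS₂m hu₂)
    rw [stepA]
    exact RdCovSq_map (Measure.map (fun ω => (Z₁ ω, Z₂ ω)) P)
      (fun y : Euc d₁ => a₁ + b₁ • y) (fun y : Euc d₂ => a₂ + b₂ • y)
      (measurable_aff a₁ b₁) (measurable_aff a₂ b₂) hS₁m hS₂m
      (fun z => congrArg R₁ (aff_left_inv a₁ hb₁.ne' z))
      (fun z => congrArg R₂ (aff_left_inv a₂ hb₂.ne' z))

end
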